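/- Let N ≥ 1 and M_N = (m_0, …, m_N) ∈ ℂ^{N+1} with m_0 ∈ ℝ and (m_1, …, m_N) ≠ 0. Then the function r ↦ λ(r; N), where λ(r; N) is the minimum eigenvalue of the Hermitian Toeplitz matrix H_N(M_N^*(r)), is strictly increasing on the interval (0, 1]. -/

import Mathlib

open ComplexOrder
open Matrix

/-- Extension of the moment sequence to `ℤ` by the convention `m_{−k} = conj(m_k)`. -/
noncomputable def mz (m : ℕ → ℂ) : ℤ → ℂ :=
  fun k => if 0 ≤ k then m k.toNat else (starRingEnd ℂ) (m (-k).toNat)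

/-- The Toeplitz matrix `H_N(M_N^*(r))` with entries `m_{k−j} r^{−|k−j|}`. -/
noncomputable def toeplitzStar (N : ℕ) (m : ℕ → ℂ) (r : ℝ) :
    Matrix (Fin (N + 1)) (Fin (N + 1)) ℂ :=
  fun j k => mz m ((k : ℤ) - (j : ℤ)) * (r : ℂ) ^ (-(((k : ℤ) - (j : ℤ)).natAbs : ℤ))

/-- If `m_0 ∈ ℝ` and `(m_1, …, m_N) ≠ 0`, then the minimum eigenvalue `λ(r; N)` of the
Hermitian Toeplitz matrix `H_N(M_N^*(r))` is strictly increasing on `(0, 1]`.  Here `lam r`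
being the minimum eigenvalue is expressed by the fact that `H_N(M_N^*(r)) − lam r • 1` is
positive semi-definite and singular. -/
noncomputable def Lmat (N : ℕ) (t : ℝ) (j i : Fin (N + 1)) : ℝ :=
  if (i : ℕ) = 0 then t ^ (j : ℕ)
  else if (i : ℕ) ≤ (j : ℕ) then Real.sqrt (1 - t * t) * t ^ ((j : ℕ) - (i : ℕ)) else 0

lemma Lmat_sum_le (N : ℕ) (t : ℝ) (ht0 : 0 < t) (ht1 : t < 1) (j k : Fin (N + 1))
    (hjk : (j : ℕ) ≤ (k : ℕ)) :
    ∑ i, Lmat N t j i * Lmat N t k i = t ^ ((k : ℕ) - (j : ℕ)) := by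
  have htt : 0 ≤ 1 - t * t := by nlinarith
  have hc : Real.sqrt (1 - t * t) * Real.sqrt (1 - t * t) = 1 - t * t := Real.mul_self_sqrt htt
  set c := Real.sqrt (1 - t * t) with hcdef
  have h1 : ∑ i : Fin (N + 1), Lmat N t j i * Lmat N t k i
      = ∑ i ∈ Finset.range (N + 1),
          ((if i = 0 then t ^ (j : ℕ) else if i ≤ (j : ℕ) then c * t ^ ((j : ℕ) - i) else 0)
          * (if i = 0 then t ^ (k : ℕ) else if i ≤ (k : ℕ) then c * t ^ ((k : ℕ) - i) else 0)) := by
    simp only [Lmat]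
    exact Fin.sum_univ_eq_sum_range (fun i =>
      (if i = 0 then t ^ (j : ℕ) else if i ≤ (j : ℕ) then c * t ^ ((j : ℕ) - i) else 0)
      * (if i = 0 then t ^ (k : ℕ) else if i ≤ (k : ℕ) then c * t ^ ((k : ℕ) - i) else 0)) (N + 1)
  rw [h1]
  rw [← Finset.sum_subset (Finset.range_subset_range.mpr (by omega : (j : ℕ) + 1 ≤ N + 1))
    (by
      intro x hx hx'
      simp only [Finset.mem_range, not_lt] at hx hx'
      have hx0 : x ≠ 0 := by omega
      have hxj : ¬ x ≤ (j : ℕ) := by omega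
      simp [hx0, hxj])]
  rw [Finset.sum_range_succ']
  have h2 : ∀ i ∈ Finset.range (j : ℕ),
      ((if i + 1 = 0 then t ^ (j : ℕ) else if i + 1 ≤ (j : ℕ) then c * t ^ ((j : ℕ) - (i+1)) else 0)
      * (if i + 1 = 0 then t ^ (k : ℕ) else if i + 1 ≤ (k : ℕ) then c * t ^ ((k : ℕ) - (i+1)) else 0))
      = (fun i => (1 - t * t) * (t ^ ((k:ℕ) - (j:ℕ)) * (t*t) ^ i)) ((j:ℕ) - 1 - i) := by
    intro i hi
    simp only [Finset.mem_range] at hi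
    have hij : i + 1 ≤ (j : ℕ) := by omega
    have hik : i + 1 ≤ (k : ℕ) := by omega
    simp only [Nat.succ_ne_zero, if_false, hij, hik, if_true]
    have e1 : (j : ℕ) - (i + 1) = (j:ℕ) - 1 - i := by omega
    have e2 : (k : ℕ) - (i + 1) = ((k:ℕ) - (j:ℕ)) + ((j:ℕ) - 1 - i) := by omega
    rw [e1, e2, pow_add, mul_pow]
    linear_combination (t ^ ((j:ℕ)-1-i) * t ^ ((j:ℕ)-1-i) * t ^ ((k:ℕ)-(j:ℕ))) * hc
  rw [Finset.sum_congr rfl h2,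
    Finset.sum_range_reflect (fun i => (1 - t * t) * (t ^ ((k:ℕ) - (j:ℕ)) * (t*t) ^ i)) (j:ℕ)]
  have h3 : ∑ i ∈ Finset.range (j : ℕ), (1 - t * t) * (t ^ ((k:ℕ) - (j:ℕ)) * (t*t) ^ i)
      = t ^ ((k:ℕ) - (j:ℕ)) * (1 - (t*t) ^ (j:ℕ)) := by
    rw [← Finset.mul_sum, ← Finset.mul_sum]
    have hg := geom_sum_mul (t*t) (j : ℕ)
    linear_combination (-(t ^ ((k:ℕ) - (j:ℕ)))) * hg
  rw [h3]
  norm_num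
  have hkj : (k:ℕ) - (j:ℕ) + (j:ℕ) = (k:ℕ) := by omega
  have h4 : t ^ ((k:ℕ) - (j:ℕ)) * (t*t) ^ (j:ℕ) = t ^ (j:ℕ) * t ^ (k:ℕ) := by
    calc t ^ ((k:ℕ)-(j:ℕ)) * (t*t)^(j:ℕ)
        = t^((k:ℕ)-(j:ℕ)+(j:ℕ)) * t^(j:ℕ) := by rw [mul_pow, pow_add]; ring
      _ = t^(j:ℕ) * t^(k:ℕ) := by rw [hkj]; ring
  linear_combination -h4

lemma Lmat_sum (N : ℕ) (t : ℝ) (ht0 : 0 < t) (ht1 : t < 1) (j k : Fin (N + 1)) :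
    ∑ i, Lmat N t j i * Lmat N t k i = t ^ (((k : ℤ) - (j : ℤ)).natAbs) := by
  rcases le_total (j : ℕ) (k : ℕ) with h | h
  · rw [Lmat_sum_le N t ht0 ht1 j k h]
    congr 1
    omega
  · have h5 : ∑ i, Lmat N t j i * Lmat N t k i = ∑ i, Lmat N t k i * Lmat N t j i := by
      simp [mul_comm]
    rw [h5, Lmat_sum_le N t ht0 ht1 k j h]
    congr 1
    omega

lemma quad_sum (N : ℕ) (t : ℝ) (ht0 : 0 < t) (ht1 : t < 1)
    (B B' : Matrix (Fin (N+1)) (Fin (N+1)) ℂ)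
    (hBB' : ∀ j k, B' j k = B j k * (t:ℂ) ^ (((k:ℤ) - (j:ℤ)).natAbs))
    (v : Fin (N+1) → ℂ) :
    ∑ i, star (fun j => (Lmat N t j i : ℂ) * v j) ⬝ᵥ B *ᵥ (fun j => (Lmat N t j i : ℂ) * v j)
      = star v ⬝ᵥ B' *ᵥ v := by
  have hLC : ∀ j k : Fin (N+1),
      ∑ i, ((Lmat N t j i : ℂ) * (Lmat N t k i : ℂ)) = (t:ℂ) ^ (((k:ℤ)-(j:ℤ)).natAbs) := by
    intro j k
    have h := Lmat_sum N t ht0 ht1 j k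
    calc ∑ i, ((Lmat N t j i : ℂ) * (Lmat N t k i : ℂ))
        = ((∑ i, Lmat N t j i * Lmat N t k i : ℝ) : ℂ) := by push_cast; rfl
      _ = _ := by rw [h]; push_cast; rfl
  calc ∑ i, star (fun j => (Lmat N t j i : ℂ) * v j) ⬝ᵥ B *ᵥ (fun j => (Lmat N t j i : ℂ) * v j)
      = ∑ i, ∑ j, ∑ k, ((Lmat N t j i : ℂ) * (Lmat N t k i))
          * ((starRingEnd ℂ) (v j) * (B j k * v k)) := by
        simp only [dotProduct, Matrix.mulVec, Pi.star_apply, star_mul',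
          Complex.star_def, Complex.conj_ofReal, Finset.mul_sum]
        exact Finset.sum_congr rfl fun i _ => Finset.sum_congr rfl fun j _ =>
          Finset.sum_congr rfl fun k _ => by ring
    _ = ∑ j, ∑ k, (∑ i, (Lmat N t j i : ℂ) * (Lmat N t k i))
          * ((starRingEnd ℂ) (v j) * (B j k * v k)) := by
        rw [Finset.sum_comm]
        refine Finset.sum_congr rfl fun j _ => ?_
        rw [Finset.sum_comm]
        exact Finset.sum_congr rfl fun k _ => (Finset.sum_mul _ _ _).symm
    _ = ∑ j, ∑ k, (starRingEnd ℂ) (v j) * (B' j k * v k) := by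
        refine Finset.sum_congr rfl fun j _ => Finset.sum_congr rfl fun k _ => ?_
        rw [hLC, hBB']; ring
    _ = star v ⬝ᵥ B' *ᵥ v := by
        simp only [dotProduct, Matrix.mulVec, Pi.star_apply,
          Complex.star_def, Finset.mul_sum]

theorem min_eigenvalue_strictMono (N : ℕ) (hN : 1 ≤ N) (m : ℕ → ℂ)
    (hm0 : (m 0).im = 0) (hm : ∃ k, 1 ≤ k ∧ k ≤ N ∧ m k ≠ 0)
    (lam : ℝ → ℝ)
    (hlam : ∀ r ∈ Set.Ioc (0 : ℝ) 1,
      (toeplitzStar N m r - (lam r : ℂ) • (1 : Matrix (Fin (N + 1)) (Fin (N + 1)) ℂ)).PosSemidef ∧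
      ∃ v : Fin (N + 1) → ℂ, v ≠ 0 ∧
        (toeplitzStar N m r - (lam r : ℂ) • 1).mulVec v = 0) :
    StrictMonoOn lam (Set.Ioc 0 1) := by
  intro r hr s hs hrs
  obtain ⟨hPr, -⟩ := hlam r hr
  obtain ⟨hPs, v, hv, hvnull⟩ := hlam s hs
  have hr0 : (0:ℝ) < r := hr.1
  have hs0 : (0:ℝ) < s := hs.1
  set t := r / s with htdef
  have ht0 : 0 < t := div_pos hr0 hs0
  have ht1 : t < 1 := (div_lt_one hs0).mpr hrs
  set A := toeplitzStar N m r - (lam r : ℂ) • (1 : Matrix (Fin (N+1)) (Fin (N+1)) ℂ) with hA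
  set A' := toeplitzStar N m s - (lam r : ℂ) • (1 : Matrix (Fin (N+1)) (Fin (N+1)) ℂ) with hA'
  have hrc : (r:ℂ) ≠ 0 := by exact_mod_cast hr0.ne'
  have hsc : (s:ℂ) ≠ 0 := by exact_mod_cast hs0.ne'
  have hBB' : ∀ j k, A' j k = A j k * (t:ℂ) ^ (((k:ℤ)-(j:ℤ)).natAbs) := by
    intro j k
    by_cases hjk : j = k
    · subst hjk
      have h0 : ((j:ℤ) - (j:ℤ)).natAbs = 0 := by omega
      simp [hA, hA', toeplitzStar, h0, Matrix.sub_apply, Matrix.smul_apply]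
    · have h1 : (1 : Matrix (Fin (N+1)) (Fin (N+1)) ℂ) j k = 0 := Matrix.one_apply_ne hjk
      simp only [hA, hA', Matrix.sub_apply, Matrix.smul_apply, h1, smul_zero, sub_zero]
      simp only [toeplitzStar]
      have hts : ((t:ℝ):ℂ) = (r:ℂ)/(s:ℂ) := by rw [htdef]; push_cast; ring
      rw [hts, _root_.zpow_neg, _root_.zpow_neg, zpow_natCast, zpow_natCast, div_pow]
      field_simp
  set u : Fin (N+1) → Fin (N+1) → ℂ := fun i j => (Lmat N t j i : ℂ) * v j with hu
  have key : ∑ i, star (u i) ⬝ᵥ A *ᵥ (u i) = star v ⬝ᵥ A' *ᵥ v :=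
    quad_sum N t ht0 ht1 A A' hBB' v
  have hterm : ∀ i, 0 ≤ star (u i) ⬝ᵥ A *ᵥ (u i) := fun i => hPr.dotProduct_mulVec_nonneg (u i)
  have hA'v : A' *ᵥ v = ((lam s : ℂ) - (lam r : ℂ)) • v := by
    have hA'e : A' = (toeplitzStar N m s - (lam s : ℂ) • 1) + ((lam s : ℂ) - (lam r:ℂ)) • 1 := by
      rw [hA', sub_smul]; abel
    rw [hA'e, Matrix.add_mulVec, hvnull, zero_add, Matrix.smul_mulVec, Matrix.one_mulVec]
  set c : ℝ := ∑ j, Complex.normSq (v j) with hcdef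
  have hvc : star v ⬝ᵥ v = (c : ℂ) := by
    simp only [dotProduct, Pi.star_apply, hcdef]
    push_cast
    refine Finset.sum_congr rfl fun j _ => ?_
    rw [Complex.star_def, mul_comm, Complex.mul_conj]
  have hcpos : 0 < c := by
    obtain ⟨j, hj⟩ := Function.ne_iff.mp hv
    replace hj : v j ≠ 0 := hj
    exact Finset.sum_pos' (fun j _ => Complex.normSq_nonneg _)
      ⟨j, Finset.mem_univ j, Complex.normSq_pos.mpr hj⟩
  have hquad : star v ⬝ᵥ A' *ᵥ v = (((lam s - lam r) * c : ℝ) : ℂ) := by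
    rw [hA'v, dotProduct_smul, smul_eq_mul, hvc]
    push_cast
    ring
  have hle : lam r ≤ lam s := by
    have h0 : (0:ℂ) ≤ (((lam s - lam r) * c : ℝ) : ℂ) := by
      rw [← hquad, ← key]
      exact Finset.sum_nonneg fun i _ => hterm i
    have h0' : (0:ℝ) ≤ (lam s - lam r) * c := Complex.zero_le_real.mp h0
    nlinarith
  refine lt_of_le_of_ne hle ?_
  intro heq
  have hsumzero : ∑ i, star (u i) ⬝ᵥ A *ᵥ (u i) = 0 := by
    rw [key, hquad, ← heq]
    simp
  have hterm0 : ∀ i, star (u i) ⬝ᵥ A *ᵥ (u i) = 0 := fun i =>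
    (Finset.sum_eq_zero_iff_of_nonneg (fun i _ => hterm i)).mp hsumzero i (Finset.mem_univ i)
  obtain ⟨j1, hj1⟩ := Function.ne_iff.mp hv
  replace hj1 : v j1 ≠ 0 := hj1
  set S : Finset (Fin (N+1)) := Finset.univ.filter (fun j => v j ≠ 0) with hS
  have hSne : S.Nonempty := ⟨j1, by simp [hS, hj1]⟩
  set j0 := S.max' hSne with hj0
  have hvj0 : v j0 ≠ 0 := by
    have := S.max'_mem hSne
    simp only [hS, Finset.mem_filter] at this
    exact this.2
  have hvgt : ∀ j, j0 < j → v j = 0 := by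
    intro j hj
    by_contra hne
    exact absurd (S.le_max' j (by simp [hS, hne])) (not_le.mpr hj)
  have hL0 : (Lmat N t j0 j0 : ℝ) ≠ 0 := by
    have hsq : (0:ℝ) < Real.sqrt (1 - t * t) := Real.sqrt_pos.mpr (by nlinarith)
    simp only [Lmat, Nat.sub_self, pow_zero, mul_one, le_refl, if_true]
    by_cases h : (j0:ℕ) = 0
    · simp only [h, if_true]
      positivity
    · simp only [h, if_false]
      exact hsq.ne'
  have husingle : u j0 = Pi.single j0 ((Lmat N t j0 j0 : ℂ) * v j0) := by
    funext j
    rcases lt_trichotomy j j0 with h | h | h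
    · have hlt : (j:ℕ) < (j0:ℕ) := h
      have h1 : ¬ ((j0:ℕ) ≤ (j:ℕ)) := by omega
      have h2 : ¬ ((j0:ℕ) = 0) := by omega
      have hL : Lmat N t j j0 = 0 := by
        simp only [Lmat, if_neg h2, if_neg h1]
      rw [Pi.single_eq_of_ne (ne_of_lt h)]
      simp [hu, hL]
    · rw [h]
      simp [hu, Pi.single_eq_same]
    · simp [hu, hvgt j h, Pi.single_eq_of_ne (ne_of_gt h)]
  have hmv : A *ᵥ (u j0) = 0 := (hPr.dotProduct_mulVec_zero_iff _).mp (hterm0 j0)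
  have hdiag0 : A j0 j0 = 0 := by
    have h := congr_fun hmv j0
    rw [husingle] at h
    simp only [Matrix.mulVec_single, Pi.zero_apply] at h
    rcases mul_eq_zero.mp h with h' | h'
    · exact h'
    · exact absurd h' (mul_ne_zero (by exact_mod_cast hL0) hvj0)
  have hAdiag : ∀ j : Fin (N+1), A j j = m 0 - (lam r : ℂ) := by
    intro j
    have h0 : ((j:ℤ) - (j:ℤ)).natAbs = 0 := by omega
    simp [hA, toeplitzStar, mz, h0, Matrix.sub_apply, Matrix.smul_apply, Matrix.one_apply_eq]
  have hm0l : m 0 - (lam r : ℂ) = 0 := by rw [← hAdiag j0]; exact hdiag0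
  obtain ⟨k, hk1, hkN, hmk⟩ := hm
  set kf : Fin (N+1) := ⟨k, by omega⟩ with hkf
  have hcol : A *ᵥ (Pi.single kf 1 : Fin (N+1) → ℂ) = 0 := by
    apply (hPr.dotProduct_mulVec_zero_iff _).mp
    rw [Matrix.mulVec_single]
    have hstar : star (Pi.single kf 1 : Fin (N+1) → ℂ) = (Pi.single kf 1 : Fin (N+1) → ℂ) := by
      funext j
      by_cases hj : j = kf
      · subst hj; simp
      · simp [Pi.single_eq_of_ne hj]
    rw [hstar, single_dotProduct]
    simp [hAdiag kf, hm0l]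
  have hA0k : A 0 kf = 0 := by
    have h := congr_fun hcol 0
    simpa using h
  have hne0k : (0 : Fin (N+1)) ≠ kf := by
    intro h
    have : (0:ℕ) = k := congrArg Fin.val h
    omega
  have hent : m k * (r:ℂ) ^ (-(((kf:ℤ) - ((0:Fin (N+1)):ℤ)).natAbs : ℤ)) = 0 := by
    have h1 : (1 : Matrix (Fin (N+1)) (Fin (N+1)) ℂ) 0 kf = 0 := Matrix.one_apply_ne hne0k
    have h2 : ((kf:ℤ) - ((0:Fin (N+1)):ℤ)) = (k:ℤ) := by
      simp [hkf]
    have h3 : mz m ((kf:ℤ) - ((0:Fin (N+1)):ℤ)) = m k := by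
      rw [h2, mz]
      simp
    have := hA0k
    rw [hA, Matrix.sub_apply, Matrix.smul_apply, h1, smul_zero, sub_zero, toeplitzStar] at this
    rwa [h3] at this
  have hrpow : (r:ℂ) ^ (-(((kf:ℤ) - ((0:Fin (N+1)):ℤ)).natAbs : ℤ)) ≠ 0 := zpow_ne_zero _ hrc
  exact hmk (by
    rcases mul_eq_zero.mp hent with h | h
    · exact h
    · exact absurd h hrpow)
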